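/- Let densities f and g on [0,1] satisfy strict likelihood-ratio dominance of f over g: for all 0 ≤ v_L < v_H ≤ 1, f(v_L)g(v_H) < f(v_H)g(v_L). Let φ : [0,1] → ℝ be bounded, measurable, and upcrossing (there exists v* such that φ ≤ 0 on [0,v*) and φ ≥ 0 on (v*,1]). If ∫_0^1 φ(v) g(v) dv ≥ 0 then ∫_0^1 φ(v) f(v) dv ≥ 0; moreover if ∫_0^1 φ g > 0 and φ is not a.e. zero then ∫_0^1 φ f > 0. -/

import Mathlib

open MeasureTheory intervalIntegral

/-- Variation-diminishing property: strict likelihood-ratio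
dominance of `f` over `g` preserves the nonnegativity (and positivity) of
integrals of bounded measurable upcrossing functions. -/
theorem stmt_14 (f g : ℝ → ℝ)
    (hfpos : ∀ v ∈ Set.Icc (0:ℝ) 1, 0 < f v)
    (hgpos : ∀ v ∈ Set.Icc (0:ℝ) 1, 0 < g v)
    (hfint : IntervalIntegrable f MeasureTheory.volume 0 1)
    (hgint : IntervalIntegrable g MeasureTheory.volume 0 1)
    (hLR : ∀ vL ∈ Set.Icc (0:ℝ) 1, ∀ vH ∈ Set.Icc (0:ℝ) 1, vL < vH →
      f vL * g vH < f vH * g vL)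
    (φ : ℝ → ℝ) (hφm : Measurable φ) (hφb : ∃ C : ℝ, ∀ v, |φ v| ≤ C)
    (hup : ∃ vs ∈ Set.Icc (0:ℝ) 1,
      (∀ v ∈ Set.Ico (0:ℝ) vs, φ v ≤ 0) ∧ (∀ v ∈ Set.Ioc vs 1, 0 ≤ φ v)) :
    ((0 ≤ ∫ v in (0:ℝ)..1, φ v * g v) → 0 ≤ ∫ v in (0:ℝ)..1, φ v * f v) ∧
      ((0 < ∫ v in (0:ℝ)..1, φ v * g v) →
        ¬ (∀ᵐ v ∂(MeasureTheory.volume.restrict (Set.Icc (0:ℝ) 1)), φ v = 0) →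
        0 < ∫ v in (0:ℝ)..1, φ v * f v) := by
  obtain ⟨vs, hvs, hneg, hpos⟩ := hup
  obtain ⟨C, hC⟩ := hφb
  have hgvs : 0 < g vs := hgpos vs hvs
  have hfvs : 0 < f vs := hfpos vs hvs
  set c : ℝ := f vs / g vs with hc
  have hcpos : 0 < c := div_pos hfvs hgvs
  have hbdd : ∃ C : ℝ, ∀ x, ‖φ x‖ ≤ C := ⟨C, fun x => hC x⟩
  have hφf : IntervalIntegrable (fun v => φ v * f v) volume 0 1 :=
    ⟨hfint.1.bdd_mul hφm.aestronglyMeasurable (ae_of_all _ (fun x => hC x)),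
     hfint.2.bdd_mul hφm.aestronglyMeasurable (ae_of_all _ (fun x => hC x))⟩
  have hφg : IntervalIntegrable (fun v => φ v * g v) volume 0 1 :=
    ⟨hgint.1.bdd_mul hφm.aestronglyMeasurable (ae_of_all _ (fun x => hC x)),
     hgint.2.bdd_mul hφm.aestronglyMeasurable (ae_of_all _ (fun x => hC x))⟩
  have key : ∀ v ∈ Set.Icc (0:ℝ) 1, 0 ≤ φ v * f v - c * (φ v * g v) := by
    intro v hv
    have heq : φ v * f v - c * (φ v * g v) = φ v * (f v - c * g v) := by ring
    rw [heq]
    rcases lt_trichotomy v vs with h | h | h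
    · have hφn : φ v ≤ 0 := hneg v ⟨hv.1, h⟩
      have hlr := hLR v hv vs hvs h
      have hlt : f v < c * g v := by
        rw [hc, div_mul_eq_mul_div, lt_div_iff₀ hgvs]
        linarith
      nlinarith
    · subst h
      have hcg : c * g v = f v := div_mul_cancel₀ _ (ne_of_gt hgvs)
      rw [hcg]
      simp
    · have hφp : 0 ≤ φ v := hpos v ⟨h, hv.2⟩
      have hlr := hLR vs hvs v hv h
      have hlt : c * g v < f v := by
        rw [hc, div_mul_eq_mul_div, div_lt_iff₀ hgvs]
        linarith
      nlinarith
  have hdiff : 0 ≤ ∫ v in (0:ℝ)..1, (φ v * f v - c * (φ v * g v)) :=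
    intervalIntegral.integral_nonneg (by norm_num) key
  rw [intervalIntegral.integral_sub hφf (hφg.const_mul c),
    intervalIntegral.integral_const_mul] at hdiff
  constructor
  · intro hg0
    nlinarith
  · intro hg0 _
    nlinarith
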